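/- For every m and t, there exists a left-compressed r-uniform hypergraph G on vertex set [t] with m edges such that λ(G) = λ^r_{(m,t)}, the maximum Lagrangian over all r-graphs with m edges and t vertices. -/

import Mathlib

open Finset

/-- The evaluation of the Lagrangian polynomial of a hypergraph with edge set `E`
at a weighting `x`. -/
noncomputable def lagEval {n : ℕ} (E : Finset (Finset (Fin n))) (x : Fin n → ℝ) : ℝ :=
  ∑ e ∈ E, ∏ i ∈ e, x i

/-- A legal weighting: nonnegative entries summing to 1. -/
def IsLegal {n : ℕ} (x : Fin n → ℝ) : Prop :=
  (∀ i, 0 ≤ x i) ∧ ∑ i, x i = 1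

/-- The Lagrangian of a hypergraph: supremum of the Lagrangian polynomial over the simplex. -/
noncomputable def lagrangian {n : ℕ} (E : Finset (Finset (Fin n))) : ℝ :=
  sSup {v | ∃ x, IsLegal x ∧ lagEval E x = v}

/-- `E` is left-compressed: whenever the increasing enumeration of `f` is pointwise at most
that of an edge `e`, `f` is also an edge. -/
def LeftCompressed {n : ℕ} (E : Finset (Finset (Fin n))) : Prop :=
  ∀ e ∈ E, ∀ f : Finset (Fin n),
    List.Forall₂ (· ≤ ·) (f.sort (· ≤ ·)) (e.sort (· ≤ ·)) → f ∈ E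

/- ----------------- auxiliary lemmas ----------------- -/

lemma list_prod_le_of_forall₂ {l₁ l₂ : List ℝ} (h : List.Forall₂ (· ≤ ·) l₁ l₂) :
    (∀ a ∈ l₁, 0 ≤ a) → l₁.prod ≤ l₂.prod := by
  induction h with
  | nil => intro; simp
  | @cons a b l₁ l₂ hab h ih =>
    intro h0
    simp only [List.prod_cons]
    have h0a : 0 ≤ a := h0 a List.mem_cons_self
    have h0l : ∀ c ∈ l₁, 0 ≤ c := fun c hc => h0 c (List.mem_cons_of_mem _ hc)
    exact mul_le_mul hab (ih h0l) (List.prod_nonneg h0l) (le_trans h0a hab)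

lemma fin_forall₂_sum {t : ℕ} {l₁ l₂ : List (Fin t)} (h : List.Forall₂ (· ≤ ·) l₁ l₂) :
    (l₁.map Fin.val).sum ≤ (l₂.map Fin.val).sum ∧
      ((l₁.map Fin.val).sum = (l₂.map Fin.val).sum → l₁ = l₂) := by
  induction h with
  | nil => simp
  | @cons a b l₁ l₂ hab h ih =>
    obtain ⟨ih1, ih2⟩ := ih
    have hab' : (a : ℕ) ≤ (b : ℕ) := hab
    simp only [List.map_cons, List.sum_cons]
    constructor
    · omega
    · intro hsum
      have hav : (a : ℕ) = (b : ℕ) := by omega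
      have hls : (l₁.map Fin.val).sum = (l₂.map Fin.val).sum := by omega
      rw [Fin.val_injective hav, ih2 hls]

lemma prod_sort_map {t : ℕ} (s : Finset (Fin t)) (x : Fin t → ℝ) :
    ((s.sort (· ≤ ·)).map x).prod = ∏ i ∈ s, x i := by
  rw [← Finset.prod_map_toList]
  exact List.Perm.prod_eq ((Finset.sort_perm_toList s (· ≤ ·)).map x)

lemma sum_sort_map {t : ℕ} (s : Finset (Fin t)) :
    ((s.sort (· ≤ ·)).map Fin.val).sum = ∑ i ∈ s, (i : ℕ) := by
  rw [← Finset.sum_map_toList]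
  exact List.Perm.sum_eq ((Finset.sort_perm_toList s (· ≤ ·)).map Fin.val)

lemma lagEval_continuous {t : ℕ} (E : Finset (Finset (Fin t))) : Continuous (lagEval E) := by
  unfold lagEval
  exact continuous_finset_sum _ fun e _ =>
    continuous_finset_prod _ fun i _ => continuous_apply i

lemma exists_optimal {t : ℕ} (ht : 0 < t) (E : Finset (Finset (Fin t))) :
    ∃ x, IsLegal x ∧ lagEval E x = lagrangian E ∧ ∀ y, IsLegal y → lagEval E y ≤ lagEval E x := by
  have hset : {x : Fin t → ℝ | IsLegal x} = stdSimplex ℝ (Fin t) := rfl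
  have hne : (stdSimplex ℝ (Fin t)).Nonempty := by
    refine ⟨fun i => if i = ⟨0, ht⟩ then 1 else 0, fun i => ?_, ?_⟩
    · dsimp only; split <;> norm_num
    · simp
  obtain ⟨x, hx, hmax⟩ := (isCompact_stdSimplex ℝ (Fin t)).exists_isMaxOn hne
    (lagEval_continuous E).continuousOn
  have hxleg : IsLegal x := hx
  have hb : ∀ y, IsLegal y → lagEval E y ≤ lagEval E x := fun y hy => hmax hy
  refine ⟨x, hxleg, ?_, hb⟩
  have hmem : lagEval E x ∈ {v | ∃ y, IsLegal y ∧ lagEval E y = v} := ⟨x, hxleg, rfl⟩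
  have hbdd : ∀ v ∈ {v | ∃ y, IsLegal y ∧ lagEval E y = v}, v ≤ lagEval E x := by
    rintro v ⟨y, hy, rfl⟩; exact hb y hy
  rw [lagrangian]
  exact le_antisymm (le_csSup ⟨lagEval E x, hbdd⟩ hmem) (csSup_le ⟨_, hmem⟩ hbdd)

lemma lagEval_le_lagrangian {t : ℕ} (ht : 0 < t) (E : Finset (Finset (Fin t)))
    {y : Fin t → ℝ} (hy : IsLegal y) : lagEval E y ≤ lagrangian E := by
  obtain ⟨x, hx, hval, hb⟩ := exists_optimal ht E
  exact le_trans (hb y hy) (le_of_eq hval)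

/-- There is a left-compressed `r`-graph on `[t]` with `m` edges attaining the maximum
Lagrangian `λ^r_{(m,t)}` over all `r`-graphs with `m` edges and `t` vertices. -/
theorem exists_left_compressed_extremal_on_t {m t r : ℕ} (hm : m ≤ t.choose r) :
    ∃ E : Finset (Finset (Fin t)), (∀ e ∈ E, e.card = r) ∧ E.card = m ∧ LeftCompressed E ∧
      lagrangian E = sSup {v | ∃ F : Finset (Finset (Fin t)),
        (∀ e ∈ F, e.card = r) ∧ F.card = m ∧ lagrangian F = v} := by
  classical
  set S : Set ℝ := {v | ∃ F : Finset (Finset (Fin t)),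
        (∀ e ∈ F, e.card = r) ∧ F.card = m ∧ lagrangian F = v} with hSdef
  have hSfin : S.Finite := by
    have hsub : S ⊆ lagrangian '' (Set.univ : Set (Finset (Finset (Fin t)))) := by
      rintro v ⟨F, _, _, h⟩; exact ⟨F, trivial, h⟩
    exact (Set.finite_univ.image _).subset hsub
  obtain ⟨F₀, hF₀sub, hF₀card⟩ := Finset.exists_subset_card_eq
    (s := Finset.powersetCard r (univ : Finset (Fin t))) (n := m)
    (by rwa [Finset.card_powersetCard, card_univ, Fintype.card_fin])
  have hF₀r : ∀ e ∈ F₀, e.card = r := fun e he =>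
    (Finset.mem_powersetCard.mp (hF₀sub he)).2
  have hS0 : lagrangian F₀ ∈ S := ⟨F₀, hF₀r, hF₀card, rfl⟩
  have hSne : S.Nonempty := ⟨_, hS0⟩
  have hub : ∀ v ∈ S, v ≤ sSup S := fun v hv => le_csSup hSfin.bddAbove hv
  rcases Nat.eq_zero_or_pos t with ht | ht
  · -- degenerate case t = 0 : no legal weightings, all Lagrangians are 0
    subst ht
    have hzero : ∀ F : Finset (Finset (Fin 0)), lagrangian F = 0 := by
      intro F
      have hempty : {v | ∃ x, IsLegal x ∧ lagEval F x = v} = ∅ := by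
        ext v
        simp only [Set.mem_setOf_eq, Set.mem_empty_iff_false, iff_false, not_exists]
        rintro x ⟨⟨_, hx1⟩, _⟩
        simp at hx1
      rw [lagrangian, hempty, Real.sSup_empty]
    refine ⟨F₀, hF₀r, hF₀card, ?_, ?_⟩
    · intro e he f hf
      have : f = e := Subsingleton.elim f e
      rwa [this]
    · have hSone : S = {0} := by
        apply Set.eq_singleton_iff_unique_mem.mpr
        refine ⟨?_, ?_⟩
        · rw [← hzero F₀]; exact hS0
        · rintro v ⟨F, _, _, h⟩; rw [← h, hzero]
      rw [hzero, hSone, csSup_singleton]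
  · -- main case t > 0
    -- the class of maximizers admitting a decreasing optimal weighting
    set A : Set (Finset (Finset (Fin t))) := {F | (∀ e ∈ F, e.card = r) ∧ F.card = m ∧
        lagrangian F = sSup S ∧ ∃ x, IsLegal x ∧ (∀ i j : Fin t, i ≤ j → x j ≤ x i) ∧
          lagEval F x = sSup S} with hAdef
    have hAne : A.Nonempty := by
      obtain ⟨F, hr, hc, hlag⟩ : ∃ F : Finset (Finset (Fin t)),
          (∀ e ∈ F, e.card = r) ∧ F.card = m ∧ lagrangian F = sSup S := by
        have := hSne.csSup_mem hSfin
        obtain ⟨F, h1, h2, h3⟩ := this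
        exact ⟨F, h1, h2, h3⟩
      obtain ⟨x, hxleg, hxval, _⟩ := exists_optimal ht F
      -- sort x decreasingly via a permutation
      set σ : Equiv.Perm (Fin t) := Tuple.sort (fun i => -x i) with hσ
      have hmono := Tuple.monotone_sort (fun i => -x i)
      set y : Fin t → ℝ := fun i => x (σ i) with hy
      have hydec : ∀ i j : Fin t, i ≤ j → y j ≤ y i := by
        intro i j hij
        have := hmono hij
        simp only [Function.comp_apply] at this
        simpa [hy] using neg_le_neg_iff.mp this
      have hyleg : IsLegal y := by
        constructor
        · intro i; exact hxleg.1 _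
        · rw [show (∑ i, y i) = ∑ i, x (σ i) from rfl]
          rw [Equiv.sum_comp σ x]
          exact hxleg.2
      set emb : Fin t ↪ Fin t := σ.symm.toEmbedding with hemb
      set F' : Finset (Finset (Fin t)) :=
        F.map ⟨fun e => e.map emb, Finset.map_injective emb⟩ with hF'
      have hF'eval : lagEval F' y = lagEval F x := by
        rw [hF', lagEval, Finset.sum_map, lagEval]
        apply Finset.sum_congr rfl
        intro e _
        rw [Function.Embedding.coeFn_mk, Finset.prod_map]
        apply Finset.prod_congr rfl
        intro i _
        simp [hy, hemb]
      have hF'r : ∀ e ∈ F', e.card = r := by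
        intro e he
        rw [hF', Finset.mem_map] at he
        obtain ⟨g, hg, rfl⟩ := he
        rw [Function.Embedding.coeFn_mk, Finset.card_map]
        exact hr g hg
      have hF'c : F'.card = m := by rw [hF', Finset.card_map]; exact hc
      have hF'lag : lagrangian F' = sSup S := by
        apply le_antisymm
        · exact hub _ ⟨F', hF'r, hF'c, rfl⟩
        · have h1 : sSup S = lagEval F' y := by rw [hF'eval, hxval, hlag]
          rw [h1]
          exact lagEval_le_lagrangian ht F' hyleg
      refine ⟨F', hF'r, hF'c, hF'lag, y, hyleg, hydec, ?_⟩
      rw [hF'eval, hxval, hlag]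
    have hAfin : A.Finite := Set.toFinite A
    obtain ⟨F, hFA, hFmin⟩ := Finset.exists_min_image hAfin.toFinset
      (fun F => ∑ e ∈ F, ∑ i ∈ e, (i : ℕ))
      (by rwa [← Set.Finite.toFinset_nonempty hAfin] at hAne)
    rw [Set.Finite.mem_toFinset] at hFA
    obtain ⟨hr, hc, hlag, x, hxleg, hxdec, hxval⟩ := hFA
    refine ⟨F, hr, hc, ?_, hlag⟩
    intro e he f hf
    by_contra hfE
    have hfe : f ≠ e := fun h => hfE (h ▸ he)
    have hcard : f.card = e.card := by
      have := hf.length_eq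
      rwa [Finset.length_sort, Finset.length_sort] at this
    -- the product over f is at least the product over e
    have hprod : ∏ i ∈ e, x i ≤ ∏ i ∈ f, x i := by
      rw [← prod_sort_map, ← prod_sort_map]
      apply list_prod_le_of_forall₂
      · rw [List.forall₂_map_left_iff, List.forall₂_map_right_iff]
        exact List.Forall₂.flip (hf.imp fun a b hab => hxdec a b hab)
      · intro a ha
        obtain ⟨i, _, rfl⟩ := List.mem_map.mp ha
        exact hxleg.1 i
    -- the label sum of f is strictly less than that of e
    have hsum : (∑ i ∈ f, (i : ℕ)) < ∑ i ∈ e, (i : ℕ) := by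
      obtain ⟨h1, h2⟩ := fin_forall₂_sum hf
      rw [sum_sort_map, sum_sort_map] at h1
      rcases lt_or_eq_of_le h1 with h | h
      · exact h
      · exfalso
        apply hfe
        have hsorteq : f.sort (· ≤ ·) = e.sort (· ≤ ·) := by
          apply h2
          rw [sum_sort_map, sum_sort_map]
          exact h
        calc f = (f.sort (· ≤ ·)).toFinset := (Finset.sort_toFinset f _).symm
          _ = (e.sort (· ≤ ·)).toFinset := by rw [hsorteq]
          _ = e := Finset.sort_toFinset e _
    -- the compressed graph
    set F' : Finset (Finset (Fin t)) := insert f (F.erase e) with hF'def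
    have hfne : f ∉ F.erase e := fun h => hfE (Finset.mem_of_mem_erase h)
    have hF'c : F'.card = m := by
      rw [hF'def, Finset.card_insert_of_notMem hfne, Finset.card_erase_of_mem he, hc]
      have hm0 : 0 < m := by rw [← hc]; exact Finset.card_pos.mpr ⟨e, he⟩
      omega
    have hF'r : ∀ g ∈ F', g.card = r := by
      intro g hg
      rw [hF'def, Finset.mem_insert] at hg
      rcases hg with rfl | hg
      · rw [hcard]; exact hr e he
      · exact hr g (Finset.mem_of_mem_erase hg)
    have heval' : lagEval F' x = (∏ i ∈ f, x i) + ∑ g ∈ F.erase e, ∏ i ∈ g, x i := by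
      rw [hF'def, lagEval, Finset.sum_insert hfne]
    have heval : (∏ i ∈ e, x i) + ∑ g ∈ F.erase e, ∏ i ∈ g, x i = lagEval F x :=
      Finset.add_sum_erase F (fun g => ∏ i ∈ g, x i) he
    have hF'ge : sSup S ≤ lagEval F' x := by
      rw [← hxval]
      rw [heval', ← heval]
      linarith
    have hF'le : lagrangian F' ≤ sSup S := hub _ ⟨F', hF'r, hF'c, rfl⟩
    have hF'lag : lagrangian F' = sSup S :=
      le_antisymm hF'le (le_trans hF'ge (lagEval_le_lagrangian ht F' hxleg))
    have hF'val : lagEval F' x = sSup S :=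
      le_antisymm (le_trans (lagEval_le_lagrangian ht F' hxleg) hF'le) hF'ge
    have hF'A : F' ∈ A := ⟨hF'r, hF'c, hF'lag, x, hxleg, hxdec, hF'val⟩
    -- weight strictly decreases, contradicting minimality
    have hw' : (∑ g ∈ F', ∑ i ∈ g, (i : ℕ)) < ∑ g ∈ F, ∑ i ∈ g, (i : ℕ) := by
      have h1 : (∑ g ∈ F', ∑ i ∈ g, (i : ℕ))
          = (∑ i ∈ f, (i : ℕ)) + ∑ g ∈ F.erase e, ∑ i ∈ g, (i : ℕ) := by
        rw [hF'def, Finset.sum_insert hfne]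
      have h2 : (∑ i ∈ e, (i : ℕ)) + (∑ g ∈ F.erase e, ∑ i ∈ g, (i : ℕ))
          = ∑ g ∈ F, ∑ i ∈ g, (i : ℕ) :=
        Finset.add_sum_erase F (fun g => ∑ i ∈ g, (i : ℕ)) he
      omega
    have := hFmin F' (Set.Finite.mem_toFinset hAfin |>.mpr hF'A)
    omega
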